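/- The function T(y) = F(y) − y·sqrt(Delta(y)) is differentiable at y = 1 with derivative T'(1) = −2·(1−p)·mu_l·(1−rho)/(1−rho_h); in particular T'(1) < 0. -/

import Mathlib

/-- `T(y) = F(y) − y·sqrt(Delta(y))` is differentiable at `y = 1`
with derivative `T'(1) = −2(1−p)·mu_l·(1−rho)/(1−rho_h) < 0`. -/
theorem T_deriv_at_one
    (p q mh ml : ℝ)
    (hp : p ∈ Set.Ioo (0:ℝ) 1) (hq : q ∈ Set.Ioo (0:ℝ) 1)
    (hmh : mh ∈ Set.Ioo (0:ℝ) 1) (hml : ml ∈ Set.Ioo (0:ℝ) 1)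
    (hpar : p + q + mh + ml = 1)
    (hrho : p / mh + q / ml < 1)
    (Delta F T : ℝ → ℝ)
    (hDelta : ∀ y, Delta y = (p*mh - (1-p)*(1-mh))^2*(q*y + 1 - q)^2
        - 2*(p*mh + (1-p)*(1-mh))*(q*y + 1 - q) + 1)
    (hF : ∀ y, F y = ((1-p) + mh - 2*(1-p)*ml)*q*y^2
        + (((1-p) + mh - 2*(1-p)*ml)*(1-q) + 2*(1-p)*q*ml - 1)*y
        + 2*(1-p)*(1-q)*ml)
    (hT : ∀ y, T y = F y - y * Real.sqrt (Delta y)) :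
    HasDerivAt T (-(2*(1-p)*ml*(1 - (p/mh + q/ml)) / (1 - p/mh))) 1 ∧
    -(2*(1-p)*ml*(1 - (p/mh + q/ml)) / (1 - p/mh)) < 0 := by
  obtain ⟨hp0, hp1⟩ := hp
  obtain ⟨hq0, hq1⟩ := hq
  obtain ⟨hmh0, hmh1⟩ := hmh
  obtain ⟨hml0, hml1⟩ := hml
  have hqm : 0 < q / ml := div_pos hq0 hml0
  have hpm1 : p / mh < 1 := by linarith
  have hplt : p < mh := by
    have := (div_lt_one hmh0).mp hpm1; linarith
  have hmp : (0:ℝ) < mh - p := by linarith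
  have hmpne : mh - p ≠ 0 := ne_of_gt hmp
  -- Delta 1 = (mh - p)^2
  have hD1 : Delta 1 = (mh - p)^2 := by rw [hDelta]; ring
  have hD1ne : Delta 1 ≠ 0 := by rw [hD1]; positivity
  have hsq : Real.sqrt (Delta 1) = mh - p := by
    rw [hD1, Real.sqrt_sq hmp.le]
  -- derivative of Delta at 1
  set A := (p*mh - (1-p)*(1-mh))^2 with hA
  set B := p*mh + (1-p)*(1-mh) with hB
  have hu : HasDerivAt (fun y : ℝ => q*y + 1 - q) q 1 := by
    simpa using ((((hasDerivAt_id (1:ℝ)).const_mul q).add_const 1).sub_const q)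
  have hDd : HasDerivAt Delta (2*q*A - 2*B*q) 1 := by
    have hfun : Delta = fun y => A*(q*y + 1 - q)^2 - 2*B*(q*y + 1 - q) + 1 :=
      funext hDelta
    rw [hfun]
    have h2 : HasDerivAt (fun y : ℝ => (q*y + 1 - q)^2) (2*(q*1+1-q)^1*q) 1 := hu.pow 2
    have := (((h2.const_mul A).sub (hu.const_mul (2*B))).add_const 1)
    refine this.congr_deriv ?_
    ring
  have hsd : HasDerivAt (fun y => Real.sqrt (Delta y))
      ((2*q*A - 2*B*q) / (2 * Real.sqrt (Delta 1))) 1 := hDd.sqrt hD1ne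
  -- derivative of F at 1
  set C := (1-p) + mh - 2*(1-p)*ml with hC
  have hFd : HasDerivAt F (2*C*q + (C*(1-q) + 2*(1-p)*q*ml - 1)) 1 := by
    have hfun : F = fun y => C*q*y^2 + (C*(1-q) + 2*(1-p)*q*ml - 1)*y + 2*(1-p)*(1-q)*ml :=
      funext hF
    rw [hfun]
    have h1 : HasDerivAt (fun y : ℝ => y^2) (2*(1:ℝ)^1*1) 1 := (hasDerivAt_id 1).pow 2
    have := (((h1.const_mul (C*q)).add
      ((hasDerivAt_id 1).const_mul (C*(1-q) + 2*(1-p)*q*ml - 1))).add_const (2*(1-p)*(1-q)*ml))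
    refine this.congr_deriv ?_
    ring
  have hTd : HasDerivAt T
      (2*C*q + (C*(1-q) + 2*(1-p)*q*ml - 1)
        - (1 * Real.sqrt (Delta 1) + 1 * ((2*q*A - 2*B*q) / (2 * Real.sqrt (Delta 1))))) 1 := by
    have hfun : T = fun y => F y - y * Real.sqrt (Delta y) := funext hT
    rw [hfun]
    exact hFd.sub (((hasDerivAt_id 1).mul hsd))
  -- identify the derivative value
  have hval : 2*C*q + (C*(1-q) + 2*(1-p)*q*ml - 1)
        - (1 * Real.sqrt (Delta 1) + 1 * ((2*q*A - 2*B*q) / (2 * Real.sqrt (Delta 1))))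
      = -(2*(1-p)*ml*(1 - (p/mh + q/ml)) / (1 - p/mh)) := by
    rw [hsq, hA, hB, hC]
    have hml' : ml = 1 - p - q - mh := by linarith
    subst hml'
    field_simp
    ring
  constructor
  · exact hval ▸ hTd
  · have h1 : (0:ℝ) < 2*(1-p)*ml*(1 - (p/mh + q/ml)) := by
      have : 0 < 1 - (p/mh + q/ml) := by linarith
      have h2 : (0:ℝ) < 1 - p := by linarith
      positivity
    have h2 : (0:ℝ) < 1 - p/mh := by linarith
    have := div_pos h1 h2
    linarith
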